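/- Let μ be a finite nonnegative Borel measure on ℝ^n and 0 < α < n. If ∫_{ℝ^n} |μ̂(ξ)| |ξ|^{−α} dξ < +∞, where μ̂(ξ) = ∫ e^{i⟨x,ξ⟩} μ(dx), then the Riesz potential U^α μ(x) = ∫ |x−y|^{α−n} μ(dy) is a continuous function on ℝ^n vanishing at infinity. -/

import Mathlib

open MeasureTheory Filter Set Metric
open scoped ENNReal NNReal Topology

noncomputable section

abbrev Euc (m : ℕ) := EuclideanSpace ℝ (Fin m)

def unitCube (k : ℕ) : Set (Euc k) := {t | ∀ i, t i ∈ Set.Icc (0:ℝ) 1}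

/-- Occupation measure of a function on the unit cube. -/
def occMeasure {k n : ℕ} (X : Euc k → Euc n) : Measure (Euc n) :=
  Measure.map X (volume.restrict (unitCube k))

/-- Riesz energy of order `α` of a measure on `ℝ^n`. -/
def rieszEnergy {n : ℕ} (α : ℝ) (μ : Measure (Euc n)) : ℝ≥0∞ :=
  ∫⁻ x, ∫⁻ y, ENNReal.ofReal (‖x - y‖ ^ (α - (n : ℝ))) ∂μ ∂μ

/-- Riesz potential of order α, as an extended-real valued function. -/
def rieszPot {n : ℕ} (α : ℝ) (μ : Measure (Euc n)) (x : Euc n) : ℝ≥0∞ :=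
  ∫⁻ y, ENNReal.ofReal (‖x - y‖ ^ (α - (n : ℝ))) ∂μ

namespace RieszAux

open Real

/-! ### Gamma-type integrals -/

lemma intOn_gamma {a r : ℝ} (ha : 0 < a) (hr : 0 < r) :
    IntegrableOn (fun t : ℝ => t ^ (a - 1) * Real.exp (-(r * t))) (Ioi 0) := by
  have h0 : IntegrableOn (fun u : ℝ => Real.exp (-u) * u ^ (a - 1)) (Ioi 0) :=
    Real.GammaIntegral_convergent ha
  have h1 : IntegrableOn (fun x : ℝ => Real.exp (-(r * x)) * (r * x) ^ (a - 1)) (Ioi 0) := by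
    have h2 := (integrableOn_Ioi_comp_mul_left_iff
      (fun u : ℝ => Real.exp (-u) * u ^ (a - 1)) 0 hr).mpr
    simpa using h2 (by simpa using h0)
  have hr' : r ^ (a - 1) ≠ 0 := (Real.rpow_pos_of_pos hr _).ne'
  have h2 := h1.const_mul (r ^ (a - 1))⁻¹
  refine IntegrableOn.congr_fun h2 ?_ measurableSet_Ioi
  intro x hx
  have hx0 : (0:ℝ) < x := hx
  simp only
  rw [Real.mul_rpow hr.le hx0.le]
  field_simp

lemma gamma_inv_eqOn {a c : ℝ} :
    EqOn (fun x : ℝ => (|(-1:ℝ)| * x ^ ((-1:ℝ) - 1)) •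
        ((fun u : ℝ => u ^ (a - 1) * Real.exp (-(c * u))) (x ^ (-1:ℝ))))
      (fun t : ℝ => t ^ (-a - 1) * Real.exp (-(c / t))) (Ioi 0) := by
  intro x hx
  have hx0 : (0:ℝ) < x := hx
  simp only [smul_eq_mul, abs_neg, abs_one, one_mul]
  rw [Real.rpow_neg_one, Real.inv_rpow hx0.le, ← Real.rpow_neg hx0.le, ← mul_assoc,
    ← Real.rpow_add hx0, div_eq_mul_inv c x]
  norm_num
  congr 1
  ring

lemma intOn_gamma_inv {a c : ℝ} (ha : 0 < a) (hc : 0 < c) :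
    IntegrableOn (fun t : ℝ => t ^ (-a - 1) * Real.exp (-(c / t))) (Ioi 0) := by
  have h0 := (integrableOn_Ioi_comp_rpow_iff
      (fun u : ℝ => u ^ (a - 1) * Real.exp (-(c * u))) (p := (-1:ℝ)) (by norm_num)).mpr
      (intOn_gamma ha hc)
  exact h0.congr_fun gamma_inv_eqOn measurableSet_Ioi

lemma int_gamma {a r : ℝ} (ha : 0 < a) (hr : 0 < r) :
    ∫ t in Ioi (0:ℝ), t ^ (a - 1) * Real.exp (-(r * t)) = (1 / r) ^ a * Real.Gamma a :=
  integral_rpow_mul_exp_neg_mul_Ioi ha hr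

lemma int_gamma_inv {a c : ℝ} (ha : 0 < a) (hc : 0 < c) :
    ∫ t in Ioi (0:ℝ), t ^ (-a - 1) * Real.exp (-(c / t)) = c ^ (-a) * Real.Gamma a := by
  have key := integral_comp_rpow_Ioi (fun u : ℝ => u ^ (a - 1) * Real.exp (-(c * u)))
      (p := (-1:ℝ)) (by norm_num)
  rw [int_gamma ha hc] at key
  rw [← setIntegral_congr_fun measurableSet_Ioi gamma_inv_eqOn, key, one_div,
    ← Real.rpow_neg_one c, ← Real.rpow_mul hc.le, neg_one_mul]

lemma lint_rpow_top (b : ℝ) : ∫⁻ t in Ioi (0:ℝ), ENNReal.ofReal (t ^ b) = ⊤ := by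
  by_contra h
  apply not_integrableOn_Ioi_rpow b
  have hmeas : Measurable fun t : ℝ => t ^ b := by fun_prop
  refine ⟨hmeas.aestronglyMeasurable, ?_⟩
  rw [hasFiniteIntegral_iff_ofReal ?_]
  · exact Ne.lt_top h
  · filter_upwards [ae_restrict_mem measurableSet_Ioi] with t ht
    exact Real.rpow_nonneg (le_of_lt ht) b

/-! ### the Fourier transform of `μ` -/

variable {n : ℕ}

def muhat (μ : Measure (Euc n)) (w : Euc n) : ℂ :=
  ∫ x, Complex.exp (Complex.I * ((inner ℝ x w : ℝ) : ℂ)) ∂μ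

variable (μ : Measure (Euc n)) [IsFiniteMeasure μ]

lemma norm_exp_inner (x w : Euc n) :
    ‖Complex.exp (Complex.I * ((inner ℝ x w : ℝ) : ℂ))‖ = 1 := by
  rw [Complex.norm_exp]
  simp

lemma norm_muhat_le (w : Euc n) : ‖muhat μ w‖ ≤ (μ univ).toReal := by
  calc ‖muhat μ w‖ ≤ ∫ x, ‖Complex.exp (Complex.I * ((inner ℝ x w : ℝ) : ℂ))‖ ∂μ :=
        norm_integral_le_integral_norm _
  _ = ∫ _x, (1:ℝ) ∂μ := by
        refine integral_congr_ae (Filter.Eventually.of_forall fun x => ?_)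
        exact norm_exp_inner x w
  _ = (μ univ).toReal := by simp [Measure.real_def]

lemma muhat_cont : Continuous (muhat μ) := by
  apply continuous_of_dominated (bound := fun _ => (1:ℝ))
  · intro w
    refine Continuous.aestronglyMeasurable ?_
    exact Complex.continuous_exp.comp (continuous_const.mul
      (Complex.continuous_ofReal.comp ((continuous_id.inner continuous_const))))
  · intro w
    exact Filter.Eventually.of_forall fun x => le_of_eq (norm_exp_inner x w)
  · exact integrable_const 1
  · exact Filter.Eventually.of_forall fun x => Complex.continuous_exp.comp
      (continuous_const.mul (Complex.continuous_ofReal.comp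
        ((continuous_const.inner continuous_id))))

/-! ### Gaussian representations -/

lemma re_aux (b r s : ℝ) :
    (-((b:ℝ):ℂ) * ((s:ℝ):ℂ) ^ 2 + 2 * (π:ℂ) * Complex.I * ((r:ℝ):ℂ)).re = -(b * s ^ 2) := by
  simp [← Complex.ofReal_pow, Complex.mul_re, Complex.mul_im]

omit [IsFiniteMeasure μ] in
lemma gauss_repr {t : ℝ} (ht : 0 < t) (z : Euc n) :
    ((Real.exp (-(π * ‖z‖ ^ 2 * t)) : ℝ) : ℂ) =
      ((t ^ (-(n : ℝ) / 2) : ℝ) : ℂ) *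
        ∫ ξ : Euc n, Complex.exp (-((π / t : ℝ) : ℂ) * (‖ξ‖ : ℂ) ^ 2 +
          2 * π * Complex.I * ((inner ℝ z ξ : ℝ) : ℂ)) := by
  have hbC : 0 < ((π / t : ℝ) : ℂ).re := by
    simpa using div_pos Real.pi_pos ht
  have key := GaussianFourier.integral_cexp_neg_mul_sq_norm_add (V := Euc n)
      (b := ((π / t : ℝ) : ℂ)) hbC (2 * (π:ℂ) * Complex.I) z
  rw [key]
  have ht' : (t:ℂ) ≠ 0 := by exact_mod_cast ht.ne'
  have hπ : (π:ℂ) ≠ 0 := by exact_mod_cast Real.pi_ne_zero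
  have h1 : ((π:ℂ) / ((π / t : ℝ) : ℂ)) = (t:ℂ) := by
    push_cast
    field_simp
  rw [h1, finrank_euclideanSpace_fin]
  have h3 : ((2 * (π:ℂ) * Complex.I) ^ 2 * ((‖z‖:ℝ):ℂ) ^ 2 / (4 * ((π / t : ℝ) : ℂ)))
      = ((-(π * ‖z‖ ^ 2 * t) : ℝ) : ℂ) := by
    have : (Complex.I) ^ 2 = -1 := Complex.I_sq
    push_cast
    field_simp
    rw [this]
    ring
  rw [h3, Complex.ofReal_exp]
  have h4 : ((t ^ (-(n:ℝ) / 2) : ℝ) : ℂ) * (t:ℂ) ^ (((n:ℕ) : ℂ) / 2) = 1 := by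
    rw [Complex.ofReal_cpow ht.le, ← Complex.cpow_add _ _ ht']
    have h5 : ((-(n:ℝ) / 2 : ℝ) : ℂ) + ((n:ℕ) : ℂ) / 2 = 0 := by push_cast; ring
    rw [h5, Complex.cpow_zero]
  rw [← mul_assoc, h4, one_mul]

lemma phi_int (x : Euc n) {t : ℝ} (ht : 0 < t) :
    Integrable (fun ξ : Euc n => Complex.exp (-((π / t : ℝ) : ℂ) * (‖ξ‖ : ℂ) ^ 2 +
        2 * π * Complex.I * ((inner ℝ x ξ : ℝ) : ℂ)) * muhat μ ((-(2 * π)) • ξ)) := by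
  have hbC : 0 < ((π / t : ℝ) : ℂ).re := by
    simpa using div_pos Real.pi_pos ht
  have h1 := GaussianFourier.integrable_cexp_neg_mul_sq_norm_add (V := Euc n) hbC (2 * (π:ℂ) * Complex.I) x
  have h2 : AEStronglyMeasurable (fun ξ : Euc n => muhat μ ((-(2 * π)) • ξ)) volume :=
    ((muhat_cont μ).comp (continuous_const_smul _)).aestronglyMeasurable
  have h3 := h1.bdd_mul h2 (ae_of_all _ fun ξ => norm_muhat_le μ _)
  exact h3.congr (Filter.Eventually.of_forall fun ξ => mul_comm _ _)

lemma gauss_prod_int {t : ℝ} (ht : 0 < t) (x : Euc n) :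
    Integrable (Function.uncurry fun y ξ : Euc n =>
      Complex.exp (-((π / t : ℝ) : ℂ) * (‖ξ‖ : ℂ) ^ 2 +
        2 * π * Complex.I * ((inner ℝ (x - y) ξ : ℝ) : ℂ))) (μ.prod volume) := by
  have hbC : 0 < ((π / t : ℝ) : ℂ).re := by
    simpa using div_pos Real.pi_pos ht
  have hgaussC := GaussianFourier.integrable_cexp_neg_mul_sq_norm_add (V := Euc n) hbC 0 0
  have hgauss : Integrable (fun ξ : Euc n => Real.exp (-(π / t * ‖ξ‖ ^ 2))) volume := by
    have := hgaussC.norm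
    refine this.congr (Filter.Eventually.of_forall fun ξ => ?_)
    simp only [Complex.norm_exp, zero_mul, add_zero, ← Complex.ofReal_pow,
      ← Complex.ofReal_mul, ← Complex.ofReal_neg, Complex.ofReal_re, neg_mul]
  have hprod : Integrable (fun p : Euc n × Euc n => Real.exp (-(π / t * ‖p.2‖ ^ 2)))
      (μ.prod volume) := by
    have h1 : Integrable (fun _ : Euc n => (1:ℝ)) μ := integrable_const 1
    have := h1.mul_prod hgauss
    refine this.congr (Filter.Eventually.of_forall fun p => ?_)
    simp
  refine hprod.mono' ?_ (Filter.Eventually.of_forall fun p => ?_)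
  · refine Continuous.aestronglyMeasurable ?_
    refine Complex.continuous_exp.comp ?_
    refine Continuous.add ?_ ?_
    · apply Continuous.mul continuous_const
      exact (Complex.continuous_ofReal.comp continuous_snd.norm).pow 2
    · apply Continuous.mul continuous_const
      exact Complex.continuous_ofReal.comp
        ((continuous_const.sub continuous_fst).inner continuous_snd)
  · rw [Function.uncurry]
    rw [Complex.norm_exp, re_aux (π / t) _ ‖p.2‖]

lemma G_repr (x : Euc n) {t : ℝ} (ht : 0 < t) :
    ((∫ y, Real.exp (-(π * ‖x - y‖ ^ 2 * t)) ∂μ : ℝ) : ℂ) =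
      ((t ^ (-(n : ℝ) / 2) : ℝ) : ℂ) *
        ∫ ξ : Euc n, Complex.exp (-((π / t : ℝ) : ℂ) * (‖ξ‖ : ℂ) ^ 2 +
            2 * π * Complex.I * ((inner ℝ x ξ : ℝ) : ℂ)) * muhat μ ((-(2 * π)) • ξ) := by
  have hcoe : ((∫ y, Real.exp (-(π * ‖x - y‖ ^ 2 * t)) ∂μ : ℝ) : ℂ) =
      ∫ y, ((Real.exp (-(π * ‖x - y‖ ^ 2 * t)) : ℝ) : ℂ) ∂μ := integral_ofReal.symm
  rw [hcoe]
  have h1 : ∀ y : Euc n, ((Real.exp (-(π * ‖x - y‖ ^ 2 * t)) : ℝ) : ℂ) =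
      ((t ^ (-(n:ℝ) / 2) : ℝ) : ℂ) * ∫ ξ : Euc n,
        Complex.exp (-((π / t : ℝ) : ℂ) * (‖ξ‖ : ℂ) ^ 2 +
          2 * π * Complex.I * ((inner ℝ (x - y) ξ : ℝ) : ℂ)) := fun y => gauss_repr ht (x - y)
  rw [integral_congr_ae (Filter.Eventually.of_forall h1), integral_const_mul]
  congr 1
  have h2 : ∀ y ξ : Euc n, Complex.exp (-((π / t : ℝ) : ℂ) * (‖ξ‖ : ℂ) ^ 2 +
        2 * π * Complex.I * ((inner ℝ (x - y) ξ : ℝ) : ℂ)) =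
      Complex.exp (-((π / t : ℝ) : ℂ) * (‖ξ‖ : ℂ) ^ 2 +
        2 * π * Complex.I * ((inner ℝ x ξ : ℝ) : ℂ)) *
        Complex.exp (Complex.I * ((inner ℝ y ((-(2 * π)) • ξ) : ℝ) : ℂ)) := by
    intro y ξ
    rw [← Complex.exp_add]
    congr 1
    have hsub : (inner ℝ (x - y) ξ : ℝ) = (inner ℝ x ξ : ℝ) - (inner ℝ y ξ : ℝ) :=
      inner_sub_left _ _ _
    have hsm : (inner ℝ y ((-(2 * π)) • ξ) : ℝ) = (-(2 * π)) * (inner ℝ y ξ : ℝ) :=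
      real_inner_smul_right _ _ _
    rw [hsub, hsm]
    push_cast
    ring
  calc ∫ y, (∫ ξ : Euc n, Complex.exp (-((π / t : ℝ) : ℂ) * (‖ξ‖ : ℂ) ^ 2 +
          2 * π * Complex.I * ((inner ℝ (x - y) ξ : ℝ) : ℂ))) ∂μ
      = ∫ ξ : Euc n, ∫ y, Complex.exp (-((π / t : ℝ) : ℂ) * (‖ξ‖ : ℂ) ^ 2 +
          2 * π * Complex.I * ((inner ℝ (x - y) ξ : ℝ) : ℂ)) ∂μ :=
        integral_integral_swap (gauss_prod_int μ ht x)
    _ = ∫ ξ : Euc n, Complex.exp (-((π / t : ℝ) : ℂ) * (‖ξ‖ : ℂ) ^ 2 +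
          2 * π * Complex.I * ((inner ℝ x ξ : ℝ) : ℂ)) * muhat μ ((-(2 * π)) • ξ) := by
        refine integral_congr_ae (Filter.Eventually.of_forall fun ξ => ?_)
        simp_rw [h2]
        rw [integral_const_mul]
        rfl

lemma G_meas (x : Euc n) :
    StronglyMeasurable fun t : ℝ => ∫ y, Real.exp (-(π * ‖x - y‖ ^ 2 * t)) ∂μ := by
  have hc : Continuous (Function.uncurry fun (t : ℝ) (y : Euc n) =>
      Real.exp (-(π * ‖x - y‖ ^ 2 * t))) := by
    apply Real.continuous_exp.comp
    apply Continuous.neg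
    exact (continuous_const.mul ((continuous_const.sub continuous_snd).norm.pow 2)).mul
      continuous_fst
  exact hc.stronglyMeasurable.integral_prod_right

/-! ### the product kernel -/

variable (α : ℝ)

def Fk (x : Euc n) : ℝ × Euc n → ℂ := fun p =>
  ((p.1 ^ (-α / 2 - 1) : ℝ) : ℂ) *
    (Complex.exp (-((π / p.1 : ℝ) : ℂ) * (‖p.2‖ : ℂ) ^ 2 +
        2 * π * Complex.I * ((inner ℝ x p.2 : ℝ) : ℂ)) * muhat μ ((-(2 * π)) • p.2))

lemma Fk_meas (x : Euc n) : StronglyMeasurable (Fk μ α x) := by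
  apply Measurable.stronglyMeasurable
  apply Measurable.mul
  · exact Complex.measurable_ofReal.comp (by fun_prop :
      Measurable fun p : ℝ × Euc n => p.1 ^ (-α / 2 - 1))
  · apply Measurable.mul
    · apply Complex.measurable_exp.comp
      apply Measurable.add
      · apply Measurable.mul
        · exact (Complex.measurable_ofReal.comp (measurable_const.div measurable_fst)).neg
        · exact (Complex.measurable_ofReal.comp continuous_snd.norm.measurable).pow_const 2
      · apply Measurable.const_mul
        exact Complex.measurable_ofReal.comp (continuous_const.inner continuous_snd).measurable
    · exact (((muhat_cont μ).comp (continuous_const_smul (-(2 * π) : ℝ))).comp continuous_snd).measurable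

lemma Fk_norm (x : Euc n) {t : ℝ} (ht : 0 < t) (ξ : Euc n) :
    ‖Fk μ α x (t, ξ)‖ =
      t ^ (-α / 2 - 1) * Real.exp (-(π * ‖ξ‖ ^ 2 / t)) * ‖muhat μ ((-(2 * π)) • ξ)‖ := by
  rw [Fk]
  simp only [norm_mul, Complex.norm_real, Real.norm_eq_abs,
    Complex.norm_exp]
  rw [re_aux (π / t) _ ‖ξ‖, abs_of_nonneg (Real.rpow_nonneg ht.le _),
    show -(π / t * ‖ξ‖ ^ 2) = -(π * ‖ξ‖ ^ 2 / t) by ring, mul_assoc]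

lemma scalar_id (hα : 0 < α) (ξ : Euc n) :
    (π * ‖ξ‖ ^ 2) ^ (-(α / 2)) * Real.Gamma (α / 2) =
      Real.Gamma (α / 2) * π ^ (-(α / 2)) * ‖ξ‖ ^ (-α) := by
  rw [Real.mul_rpow Real.pi_pos.le (by positivity)]
  have h2 : ((‖ξ‖ : ℝ) ^ 2) ^ (-(α / 2)) = ‖ξ‖ ^ (-α) := by
    rw [← Real.rpow_natCast ‖ξ‖ 2, ← Real.rpow_mul (norm_nonneg _)]
    congr 1
    ring
  rw [h2]
  ring

lemma slice_t_lint (hα : 0 < α) (x : Euc n) {ξ : Euc n} (hξ : ξ ≠ 0) :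
    ∫⁻ t in Ioi (0:ℝ), ‖Fk μ α x (t, ξ)‖₊ =
      ENNReal.ofReal (Real.Gamma (α / 2) * π ^ (-(α / 2)) * ‖ξ‖ ^ (-α)) *
        ‖muhat μ ((-(2 * π)) • ξ)‖₊ := by
  have hξ0 : (0:ℝ) < ‖ξ‖ := norm_pos_iff.mpr hξ
  have hc : (0:ℝ) < π * ‖ξ‖ ^ 2 := by positivity
  have ha2 : (0:ℝ) < α / 2 := by positivity
  have h1 : ∫⁻ t in Ioi (0:ℝ), (‖Fk μ α x (t, ξ)‖₊ : ℝ≥0∞) =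
      ∫⁻ t in Ioi (0:ℝ), ENNReal.ofReal
        (t ^ (-(α / 2) - 1) * Real.exp (-(π * ‖ξ‖ ^ 2 / t)) * ‖muhat μ ((-(2 * π)) • ξ)‖) := by
    refine setLIntegral_congr_fun_ae measurableSet_Ioi (ae_of_all _ fun t htp => ?_)
    rw [← enorm_eq_nnnorm, ← ofReal_norm, Fk_norm μ α x htp ξ,
      show (-(α / 2) - 1 : ℝ) = -α / 2 - 1 by ring]
  rw [h1, ← ofReal_integral_eq_lintegral_ofReal ((intOn_gamma_inv ha2 hc).mul_const _) ?_]
  · rw [integral_mul_const, int_gamma_inv ha2 hc, ENNReal.ofReal_mul (by positivity),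
      ofReal_norm, enorm_eq_nnnorm]
    congr 2
    exact scalar_id α hα ξ
  · filter_upwards [ae_restrict_mem measurableSet_Ioi] with t htp
    have ht0 : (0:ℝ) < t := htp
    positivity

lemma slice_t_int (hα : 0 < α) (x : Euc n) {ξ : Euc n} (hξ : ξ ≠ 0) :
    ∫ t in Ioi (0:ℝ), Fk μ α x (t, ξ) =
      ((Real.Gamma (α / 2) * π ^ (-(α / 2)) * ‖ξ‖ ^ (-α) : ℝ) : ℂ) *
        (Complex.exp (2 * π * Complex.I * ((inner ℝ x ξ : ℝ) : ℂ)) *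
          muhat μ ((-(2 * π)) • ξ)) := by
  have hξ0 : (0:ℝ) < ‖ξ‖ := norm_pos_iff.mpr hξ
  have hc : (0:ℝ) < π * ‖ξ‖ ^ 2 := by positivity
  have ha2 : (0:ℝ) < α / 2 := by positivity
  have hfac : EqOn (fun t : ℝ => Fk μ α x (t, ξ))
      (fun t : ℝ => (t ^ (-(α / 2) - 1) * Real.exp (-(π * ‖ξ‖ ^ 2 / t))) •
        (Complex.exp (2 * π * Complex.I * ((inner ℝ x ξ : ℝ) : ℂ)) *
          muhat μ ((-(2 * π)) • ξ))) (Ioi 0) := by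
    intro t htp
    have ht0 : (0:ℝ) < t := htp
    simp only [Fk]
    rw [Complex.real_smul, Complex.exp_add]
    have hA : Complex.exp (-((π / t : ℝ) : ℂ) * ((‖ξ‖ : ℝ) : ℂ) ^ 2) =
        ((Real.exp (-(π * ‖ξ‖ ^ 2 / t)) : ℝ) : ℂ) := by
      rw [Complex.ofReal_exp]
      congr 1
      push_cast
      ring
    rw [hA]
    push_cast
    rw [show (-(α / 2) - 1 : ℝ) = -α / 2 - 1 by ring]
    ring
  rw [setIntegral_congr_fun measurableSet_Ioi hfac, integral_smul_const,
    int_gamma_inv ha2 hc, Complex.real_smul]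
  congr 1
  exact congrArg Complex.ofReal (scalar_id α hα ξ)

/-! ### finiteness from the Fourier hypothesis -/

def Jint : ℝ≥0∞ := ∫⁻ ξ : Euc n, (‖muhat μ ξ‖₊ : ℝ≥0∞) * ENNReal.ofReal (‖ξ‖ ^ (-α))

lemma J_lt_top (hα : 0 < α) (hFin : Jint μ α ≠ ⊤) :
    ∫⁻ ξ : Euc n, (‖muhat μ ((-(2 * π)) • ξ)‖₊ : ℝ≥0∞) * ENNReal.ofReal (‖ξ‖ ^ (-α)) < ⊤ := by
  have h2 : (0:ℝ) < 2 * π := by positivity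
  have hr : (-(2 * π) : ℝ) ≠ 0 := neg_ne_zero.mpr h2.ne'
  have hFm : Measurable fun η : Euc n =>
      (‖muhat μ η‖₊ : ℝ≥0∞) * ENNReal.ofReal (‖η‖ ^ (-α)) := by
    refine Measurable.mul (f := fun η : Euc n => (‖muhat μ η‖₊ : ℝ≥0∞))
      (g := fun η : Euc n => ENNReal.ofReal (‖η‖ ^ (-α))) ?_ ?_
    · exact (muhat_cont μ).measurable.nnnorm.coe_nnreal_ennreal
    · exact Measurable.ennreal_ofReal (by fun_prop)
  have hpt : ∀ ξ : Euc n, ENNReal.ofReal (‖ξ‖ ^ (-α)) =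
      ENNReal.ofReal ((2 * π) ^ α) * ENNReal.ofReal (‖(-(2 * π)) • ξ‖ ^ (-α)) := by
    intro ξ
    rw [← ENNReal.ofReal_mul (by positivity)]
    congr 1
    rw [norm_smul, Real.norm_eq_abs, abs_neg, abs_of_pos h2,
      Real.mul_rpow h2.le (norm_nonneg ξ), ← mul_assoc, ← Real.rpow_add h2,
      show α + -α = 0 from by ring, Real.rpow_zero, one_mul]
  calc ∫⁻ ξ : Euc n, (‖muhat μ ((-(2 * π)) • ξ)‖₊ : ℝ≥0∞) * ENNReal.ofReal (‖ξ‖ ^ (-α))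
      = ∫⁻ ξ : Euc n, ENNReal.ofReal ((2 * π) ^ α) *
          ((‖muhat μ ((-(2 * π)) • ξ)‖₊ : ℝ≥0∞) *
            ENNReal.ofReal (‖(-(2 * π)) • ξ‖ ^ (-α))) := by
        refine lintegral_congr fun ξ => ?_
        rw [hpt ξ]
        ring
    _ = ENNReal.ofReal ((2 * π) ^ α) * ∫⁻ ξ : Euc n,
          (‖muhat μ ((-(2 * π)) • ξ)‖₊ : ℝ≥0∞) *
            ENNReal.ofReal (‖(-(2 * π)) • ξ‖ ^ (-α)) :=
        lintegral_const_mul' _ _ ENNReal.ofReal_ne_top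
    _ = ENNReal.ofReal ((2 * π) ^ α) * ∫⁻ η, (‖muhat μ η‖₊ : ℝ≥0∞) *
          ENNReal.ofReal (‖η‖ ^ (-α)) ∂(Measure.map ((-(2 * π)) • ·) volume) := by
        rw [lintegral_map hFm (measurable_const_smul _)]
    _ < ⊤ := by
        rw [Measure.map_addHaar_smul volume hr, lintegral_smul_measure]
        refine ENNReal.mul_lt_top ENNReal.ofReal_lt_top
          (ENNReal.mul_lt_top ENNReal.ofReal_lt_top ?_)
        exact lt_top_iff_ne_top.mpr hFin

lemma ae_ne_zero (hn : 0 < n) : ∀ᵐ ξ ∂(volume : Measure (Euc n)), ξ ≠ 0 := by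
  haveI : Nontrivial (Euc n) := by
    refine ⟨⟨EuclideanSpace.single ⟨0, hn⟩ (1:ℝ), 0, fun h => ?_⟩⟩
    simpa using congrArg (fun v : Euc n => v ⟨0, hn⟩) h
  rw [ae_iff]
  have h1 : {ξ : Euc n | ¬ ξ ≠ 0} = {0} := by ext ξ; simp
  rw [h1]
  exact measure_singleton 0

lemma Fk_lint_lt_top (hα : 0 < α) (hαn : α < n) (x : Euc n) (hFin : Jint μ α ≠ ⊤) :
    ∫⁻ p, (‖Fk μ α x p‖₊ : ℝ≥0∞) ∂((volume.restrict (Ioi 0)).prod volume) < ⊤ := by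
  have hn : 0 < n := by exact_mod_cast hα.trans hαn
  have hmeas : Measurable fun p : ℝ × Euc n => (‖Fk μ α x p‖₊ : ℝ≥0∞) :=
    (Fk_meas μ α x).measurable.nnnorm.coe_nnreal_ennreal
  rw [lintegral_prod_symm _ hmeas.aemeasurable]
  calc ∫⁻ ξ : Euc n, ∫⁻ t in Ioi (0:ℝ), (‖Fk μ α x (t, ξ)‖₊ : ℝ≥0∞)
      = ∫⁻ ξ : Euc n, ENNReal.ofReal (Real.Gamma (α / 2) * π ^ (-(α / 2))) *
          ((‖muhat μ ((-(2 * π)) • ξ)‖₊ : ℝ≥0∞) * ENNReal.ofReal (‖ξ‖ ^ (-α))) := by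
        refine lintegral_congr_ae ((ae_ne_zero hn).mono fun ξ hξ => ?_)
        dsimp only
        rw [slice_t_lint μ α hα x hξ, ENNReal.ofReal_mul (by positivity)]
        ring
    _ = ENNReal.ofReal (Real.Gamma (α / 2) * π ^ (-(α / 2))) *
          ∫⁻ ξ : Euc n, (‖muhat μ ((-(2 * π)) • ξ)‖₊ : ℝ≥0∞) *
            ENNReal.ofReal (‖ξ‖ ^ (-α)) :=
        lintegral_const_mul' _ _ ENNReal.ofReal_ne_top
    _ < ⊤ := ENNReal.mul_lt_top ENNReal.ofReal_lt_top (J_lt_top μ α hα hFin)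

def hfun : Euc n → ℂ := fun ξ =>
  ((Real.Gamma (α / 2) * π ^ (-(α / 2)) * ‖ξ‖ ^ (-α) : ℝ) : ℂ) * muhat μ ((-(2 * π)) • ξ)

lemma hfun_int (hα : 0 < α) (hFin : Jint μ α ≠ ⊤) : Integrable (hfun μ α) := by
  constructor
  · apply Measurable.aestronglyMeasurable
    apply Measurable.mul
    · exact Complex.measurable_ofReal.comp (by fun_prop :
        Measurable fun ξ : Euc n => Real.Gamma (α / 2) * π ^ (-(α / 2)) * ‖ξ‖ ^ (-α))
    · exact ((muhat_cont μ).comp (continuous_const_smul _)).measurable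
  · have h1 : ∫⁻ ξ : Euc n, (‖hfun μ α ξ‖₊ : ℝ≥0∞) =
        ∫⁻ ξ : Euc n, ENNReal.ofReal (Real.Gamma (α / 2) * π ^ (-(α / 2))) *
          ((‖muhat μ ((-(2 * π)) • ξ)‖₊ : ℝ≥0∞) * ENNReal.ofReal (‖ξ‖ ^ (-α))) := by
      refine lintegral_congr fun ξ => ?_
      rw [← enorm_eq_nnnorm, ← ofReal_norm]
      rw [hfun, norm_mul, Complex.norm_real, Real.norm_eq_abs, abs_of_nonneg (by positivity)]
      rw [ENNReal.ofReal_mul (by positivity :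
          (0:ℝ) ≤ Real.Gamma (α / 2) * π ^ (-(α / 2)) * ‖ξ‖ ^ (-α)),
        ENNReal.ofReal_mul (by positivity : (0:ℝ) ≤ Real.Gamma (α / 2) * π ^ (-(α / 2))),
        ofReal_norm, enorm_eq_nnnorm]
      ring
    rw [HasFiniteIntegral]
    change (∫⁻ ξ : Euc n, (‖hfun μ α ξ‖₊ : ℝ≥0∞)) < ⊤
    rw [h1, lintegral_const_mul' _ _ ENNReal.ofReal_ne_top]
    exact ENNReal.mul_lt_top ENNReal.ofReal_lt_top (J_lt_top μ α hα hFin)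

lemma G_int (x : Euc n) {t : ℝ} (ht : 0 < t) :
    Integrable (fun y => Real.exp (-(π * ‖x - y‖ ^ 2 * t))) μ := by
  refine (integrable_const (1:ℝ)).mono' ?_ (ae_of_all _ fun y => ?_)
  · exact (Real.continuous_exp.comp ((continuous_const.mul
      ((continuous_const.sub continuous_id).norm.pow 2)).mul continuous_const).neg
      ).aestronglyMeasurable
  · rw [Real.norm_eq_abs, abs_of_nonneg (Real.exp_nonneg _)]
    exact Real.exp_le_one_iff.mpr (neg_nonpos.mpr (by positivity))

lemma slice_bound (x : Euc n) {t : ℝ} (ht : 0 < t) :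
    ENNReal.ofReal (t ^ (((n : ℝ) - α) / 2 - 1)) *
        ∫⁻ y, ENNReal.ofReal (Real.exp (-(π * ‖x - y‖ ^ 2 * t))) ∂μ ≤
      ∫⁻ ξ : Euc n, (‖Fk μ α x (t, ξ)‖₊ : ℝ≥0∞) := by
  have hGnn : (0:ℝ) ≤ ∫ y, Real.exp (-(π * ‖x - y‖ ^ 2 * t)) ∂μ :=
    integral_nonneg fun y => Real.exp_nonneg _
  rw [← ofReal_integral_eq_lintegral_ofReal (G_int μ x ht)
      (ae_of_all _ fun y => Real.exp_nonneg _),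
    ← ENNReal.ofReal_mul (Real.rpow_nonneg ht.le _)]
  have hFkint : Integrable (fun ξ : Euc n => Fk μ α x (t, ξ)) volume := by
    have h2 := (phi_int μ x ht).const_mul (((t ^ (-α / 2 - 1) : ℝ) : ℂ))
    exact h2
  simp_rw [← enorm_eq_nnnorm]
  rw [← ofReal_integral_norm_eq_lintegral_enorm hFkint]
  apply ENNReal.ofReal_le_ofReal
  have hnorm : ∫ ξ : Euc n, ‖Fk μ α x (t, ξ)‖ =
      t ^ (-α / 2 - 1) * ∫ ξ : Euc n,
        Real.exp (-(π * ‖ξ‖ ^ 2 / t)) * ‖muhat μ ((-(2 * π)) • ξ)‖ := by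
    rw [← integral_const_mul]
    refine integral_congr_ae (ae_of_all _ fun ξ => ?_)
    dsimp only
    rw [Fk_norm μ α x ht ξ, mul_assoc]
  have hGle : (∫ y, Real.exp (-(π * ‖x - y‖ ^ 2 * t)) ∂μ) ≤
      t ^ (-(n:ℝ) / 2) * ∫ ξ : Euc n,
        Real.exp (-(π * ‖ξ‖ ^ 2 / t)) * ‖muhat μ ((-(2 * π)) • ξ)‖ := by
    have h7 : (∫ y, Real.exp (-(π * ‖x - y‖ ^ 2 * t)) ∂μ) =
        ‖((∫ y, Real.exp (-(π * ‖x - y‖ ^ 2 * t)) ∂μ : ℝ) : ℂ)‖ := by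
      rw [Complex.norm_real, Real.norm_eq_abs, abs_of_nonneg hGnn]
    rw [h7, G_repr μ x ht, norm_mul, Complex.norm_real, Real.norm_eq_abs,
      abs_of_nonneg (Real.rpow_nonneg ht.le _)]
    refine mul_le_mul_of_nonneg_left ?_ (Real.rpow_nonneg ht.le _)
    calc ‖∫ ξ : Euc n, Complex.exp (-((π / t : ℝ) : ℂ) * (‖ξ‖ : ℂ) ^ 2 +
            2 * π * Complex.I * ((inner ℝ x ξ : ℝ) : ℂ)) * muhat μ ((-(2 * π)) • ξ)‖
        ≤ ∫ ξ : Euc n, ‖Complex.exp (-((π / t : ℝ) : ℂ) * (‖ξ‖ : ℂ) ^ 2 +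
            2 * π * Complex.I * ((inner ℝ x ξ : ℝ) : ℂ)) * muhat μ ((-(2 * π)) • ξ)‖ :=
          norm_integral_le_integral_norm _
      _ = ∫ ξ : Euc n, Real.exp (-(π * ‖ξ‖ ^ 2 / t)) * ‖muhat μ ((-(2 * π)) • ξ)‖ := by
          refine integral_congr_ae (ae_of_all _ fun ξ => ?_)
          dsimp only
          rw [norm_mul, Complex.norm_exp, re_aux (π / t) _ ‖ξ‖,
            show -(π / t * ‖ξ‖ ^ 2) = -(π * ‖ξ‖ ^ 2 / t) by ring]
  calc t ^ (((n:ℝ) - α) / 2 - 1) * (∫ y, Real.exp (-(π * ‖x - y‖ ^ 2 * t)) ∂μ)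
      ≤ t ^ (((n:ℝ) - α) / 2 - 1) * (t ^ (-(n:ℝ) / 2) * ∫ ξ : Euc n,
          Real.exp (-(π * ‖ξ‖ ^ 2 / t)) * ‖muhat μ ((-(2 * π)) • ξ)‖) :=
        mul_le_mul_of_nonneg_left hGle (Real.rpow_nonneg ht.le _)
    _ = t ^ (-α / 2 - 1) * ∫ ξ : Euc n,
          Real.exp (-(π * ‖ξ‖ ^ 2 / t)) * ‖muhat μ ((-(2 * π)) • ξ)‖ := by
        rw [← mul_assoc, ← Real.rpow_add ht,
          show ((n:ℝ) - α) / 2 - 1 + (-(n:ℝ) / 2) = -α / 2 - 1 by ring]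
    _ = ∫ ξ : Euc n, ‖Fk μ α x (t, ξ)‖ := hnorm.symm

/-! ### the key identity -/

lemma kernel_id (hα : 0 < α) (hαn : α < n) {r : ℝ} (hr : 0 < r) :
    ENNReal.ofReal (r ^ (α - (n : ℝ))) =
      ENNReal.ofReal (π ^ (((n : ℝ) - α) / 2) / Real.Gamma (((n : ℝ) - α) / 2)) *
        ∫⁻ t in Ioi (0:ℝ),
          ENNReal.ofReal (t ^ (((n : ℝ) - α) / 2 - 1) * Real.exp (-(π * r ^ 2 * t))) := by
  set s := (n : ℝ) - α with hs
  have hs0 : 0 < s := sub_pos.mpr hαn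
  have hrr : 0 < π * r ^ 2 := by positivity
  have hInt : IntegrableOn (fun t : ℝ => t ^ (s / 2 - 1) * Real.exp (-(π * r ^ 2 * t)))
      (Ioi 0) := intOn_gamma (by positivity) hrr
  have hnn : 0 ≤ᵐ[volume.restrict (Ioi 0)]
      fun t : ℝ => t ^ (s / 2 - 1) * Real.exp (-(π * r ^ 2 * t)) := by
    filter_upwards [ae_restrict_mem measurableSet_Ioi] with t htp
    have : (0:ℝ) < t := htp
    positivity
  rw [← ofReal_integral_eq_lintegral_ofReal hInt hnn, int_gamma (by positivity) hrr,
    ← ENNReal.ofReal_mul (by positivity)]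
  congr 1
  have hΓ : 0 < Real.Gamma (s / 2) := Real.Gamma_pos_of_pos (by positivity)
  have hπs : (0:ℝ) < π ^ (s / 2) := Real.rpow_pos_of_pos Real.pi_pos _
  have hrs : (0:ℝ) < r ^ s := Real.rpow_pos_of_pos hr _
  have e2 : ((r:ℝ) ^ 2) ^ (s / 2) = r ^ s := by
    rw [← Real.rpow_natCast r 2, ← Real.rpow_mul hr.le]
    congr 1
    ring
  rw [Real.div_rpow (by norm_num) hrr.le, Real.one_rpow,
    Real.mul_rpow Real.pi_pos.le (by positivity), e2,
    show α - (n:ℝ) = -s from by rw [hs]; ring, Real.rpow_neg hr.le]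
  field_simp

lemma key (hα : 0 < α) (hαn : α < n) (hFin : Jint μ α ≠ ⊤) (x : Euc n) :
    rieszPot α μ x ≠ ⊤ ∧
      (rieszPot α μ x).toReal =
        (π ^ (((n : ℝ) - α) / 2) / Real.Gamma (((n : ℝ) - α) / 2)) *
          (FourierTransformInv.fourierInv (hfun μ α) x).re := by
  have hn : 0 < n := by exact_mod_cast hα.trans hαn
  have hs0 : 0 < ((n:ℝ) - α) := sub_pos.mpr hαn
  have hc₀pos : 0 < π ^ (((n:ℝ) - α) / 2) / Real.Gamma (((n:ℝ) - α) / 2) :=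
    div_pos (Real.rpow_pos_of_pos Real.pi_pos _) (Real.Gamma_pos_of_pos (by positivity))
  have htot := Fk_lint_lt_top μ α hα hαn x hFin
  have hmeas : Measurable fun p : ℝ × Euc n => (‖Fk μ α x p‖₊ : ℝ≥0∞) :=
    (Fk_meas μ α x).measurable.nnnorm.coe_nnreal_ennreal
  set A : ℝ≥0∞ := ∫⁻ t in Ioi (0:ℝ), ENNReal.ofReal (t ^ (((n:ℝ) - α) / 2 - 1)) *
      ∫⁻ y, ENNReal.ofReal (Real.exp (-(π * ‖x - y‖ ^ 2 * t))) ∂μ with hA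
  have hAle : A ≤ ∫⁻ p, (‖Fk μ α x p‖₊ : ℝ≥0∞) ∂((volume.restrict (Ioi 0)).prod volume) := by
    rw [lintegral_prod _ hmeas.aemeasurable, hA]
    refine lintegral_mono_ae ?_
    filter_upwards [ae_restrict_mem measurableSet_Ioi] with t htp
    exact slice_bound μ α x htp
  have hAfin : A < ⊤ := lt_of_le_of_lt hAle htot
  have hatom : μ {x} = 0 := by
    by_contra hne
    have h1 : ∀ t ∈ Ioi (0:ℝ), μ {x} ≤
        ∫⁻ y, ENNReal.ofReal (Real.exp (-(π * ‖x - y‖ ^ 2 * t))) ∂μ := by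
      intro t htp
      have h2 : μ {x} = ∫⁻ y in {x},
          ENNReal.ofReal (Real.exp (-(π * ‖x - y‖ ^ 2 * t))) ∂μ := by
        rw [← setLIntegral_one]
        refine setLIntegral_congr_fun_ae (measurableSet_singleton x) (ae_of_all _ fun y hy => ?_)
        rw [Set.mem_singleton_iff] at hy
        simp [hy]
      rw [h2]
      exact setLIntegral_le_lintegral _ _
    have h3 : (∫⁻ t in Ioi (0:ℝ), ENNReal.ofReal (t ^ (((n:ℝ) - α) / 2 - 1))) * μ {x} ≤ A := by
      rw [← lintegral_mul_const' _ _ (measure_ne_top μ _), hA]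
      refine lintegral_mono_ae ?_
      filter_upwards [ae_restrict_mem measurableSet_Ioi] with t htp
      exact mul_le_mul_right (h1 t htp) _
    rw [lint_rpow_top (((n:ℝ) - α) / 2 - 1), ENNReal.top_mul hne] at h3
    exact hAfin.ne (top_le_iff.mp h3)
  have haex : ∀ᵐ y ∂μ, y ≠ x := by
    rw [ae_iff]
    have h1 : {y : Euc n | ¬ y ≠ x} = {x} := by ext y; simp
    rw [h1]
    exact hatom
  have hriesz : rieszPot α μ x =
      ENNReal.ofReal (π ^ (((n:ℝ) - α) / 2) / Real.Gamma (((n:ℝ) - α) / 2)) * A := by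
    rw [rieszPot]
    have h1 : ∫⁻ y, ENNReal.ofReal (‖x - y‖ ^ (α - (n:ℝ))) ∂μ =
        ∫⁻ y, ENNReal.ofReal (π ^ (((n:ℝ) - α) / 2) / Real.Gamma (((n:ℝ) - α) / 2)) *
          (∫⁻ t in Ioi (0:ℝ), ENNReal.ofReal (t ^ (((n:ℝ) - α) / 2 - 1) *
            Real.exp (-(π * ‖x - y‖ ^ 2 * t)))) ∂μ := by
      refine lintegral_congr_ae (haex.mono fun y hy => ?_)
      have hxy : (0:ℝ) < ‖x - y‖ := by
        rw [norm_pos_iff, sub_ne_zero]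
        exact fun h => hy h.symm
      exact kernel_id α hα hαn hxy
    rw [h1, lintegral_const_mul' _ _ ENNReal.ofReal_ne_top]
    congr 1
    have hswap : ∫⁻ y, (∫⁻ t in Ioi (0:ℝ), ENNReal.ofReal (t ^ (((n:ℝ) - α) / 2 - 1) *
          Real.exp (-(π * ‖x - y‖ ^ 2 * t)))) ∂μ =
        ∫⁻ t in Ioi (0:ℝ), ∫⁻ y, ENNReal.ofReal (t ^ (((n:ℝ) - α) / 2 - 1) *
          Real.exp (-(π * ‖x - y‖ ^ 2 * t))) ∂μ := by
      apply lintegral_lintegral_swap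
      apply Measurable.aemeasurable
      apply Measurable.ennreal_ofReal
      apply Measurable.mul
      · exact (by fun_prop : Measurable fun p : Euc n × ℝ => p.2 ^ (((n:ℝ) - α) / 2 - 1))
      · exact (Real.continuous_exp.comp ((continuous_const.mul
          ((continuous_const.sub continuous_fst).norm.pow 2)).mul continuous_snd).neg).measurable
    rw [hswap, hA]
    refine setLIntegral_congr_fun_ae measurableSet_Ioi (ae_of_all _ fun t htp => ?_)
    rw [← lintegral_const_mul' _ _ ENNReal.ofReal_ne_top]
    refine lintegral_congr fun y => ?_
    rw [← ENNReal.ofReal_mul (Real.rpow_nonneg (le_of_lt htp) _)]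
  have hfinite : rieszPot α μ x ≠ ⊤ := by
    rw [hriesz]
    exact (ENNReal.mul_lt_top ENNReal.ofReal_lt_top hAfin).ne
  refine ⟨hfinite, ?_⟩
  have hA2 : A = ∫⁻ t in Ioi (0:ℝ), ENNReal.ofReal (t ^ (((n:ℝ) - α) / 2 - 1) *
      ∫ y, Real.exp (-(π * ‖x - y‖ ^ 2 * t)) ∂μ) := by
    rw [hA]
    refine setLIntegral_congr_fun_ae measurableSet_Ioi (ae_of_all _ fun t htp => ?_)
    rw [← ofReal_integral_eq_lintegral_ofReal (G_int μ x htp)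
        (ae_of_all _ fun y => Real.exp_nonneg _),
      ← ENNReal.ofReal_mul (Real.rpow_nonneg (le_of_lt htp) _)]
  have hP : ∫ t in Ioi (0:ℝ), t ^ (((n:ℝ) - α) / 2 - 1) *
      ∫ y, Real.exp (-(π * ‖x - y‖ ^ 2 * t)) ∂μ = A.toReal := by
    rw [hA2, integral_eq_lintegral_of_nonneg_ae ?_ ?_]
    · filter_upwards [ae_restrict_mem measurableSet_Ioi] with t htp
      exact mul_nonneg (Real.rpow_nonneg (le_of_lt htp) _)
        (integral_nonneg fun y => Real.exp_nonneg _)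
    · exact ((Measurable.stronglyMeasurable (by fun_prop :
        Measurable fun t : ℝ => t ^ (((n:ℝ) - α) / 2 - 1))).mul
          (G_meas μ x)).aestronglyMeasurable
  have hFkint2 : Integrable (Fk μ α x) ((volume.restrict (Ioi 0)).prod volume) :=
    ⟨(Fk_meas μ α x).aestronglyMeasurable, htot⟩
  have hre : ∀ t ∈ Ioi (0:ℝ), t ^ (((n:ℝ) - α) / 2 - 1) *
      ∫ y, Real.exp (-(π * ‖x - y‖ ^ 2 * t)) ∂μ = (∫ ξ : Euc n, Fk μ α x (t, ξ)).re := by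
    intro t htp
    have h5 : (∫ ξ : Euc n, Fk μ α x (t, ξ)) = ((t ^ (-α / 2 - 1) : ℝ) : ℂ) *
        ∫ ξ : Euc n, Complex.exp (-((π / t : ℝ) : ℂ) * (‖ξ‖ : ℂ) ^ 2 +
          2 * π * Complex.I * ((inner ℝ x ξ : ℝ) : ℂ)) * muhat μ ((-(2 * π)) • ξ) := by
      simp only [Fk]
      rw [integral_const_mul]
    have h7 : (∫ ξ : Euc n, Complex.exp (-((π / t : ℝ) : ℂ) * (‖ξ‖ : ℂ) ^ 2 +
          2 * π * Complex.I * ((inner ℝ x ξ : ℝ) : ℂ)) * muhat μ ((-(2 * π)) • ξ)) =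
        ((t ^ ((n:ℝ) / 2) : ℝ) : ℂ) *
          ((∫ y, Real.exp (-(π * ‖x - y‖ ^ 2 * t)) ∂μ : ℝ) : ℂ) := by
      rw [G_repr μ x htp, ← mul_assoc, ← Complex.ofReal_mul, ← Real.rpow_add htp,
        show (n:ℝ) / 2 + -(n:ℝ) / 2 = 0 by ring, Real.rpow_zero, Complex.ofReal_one, one_mul]
    rw [h5, h7, ← mul_assoc, ← Complex.ofReal_mul, ← Real.rpow_add htp, ← Complex.ofReal_mul,
      show -α / 2 - 1 + (n:ℝ) / 2 = ((n:ℝ) - α) / 2 - 1 by ring, Complex.ofReal_re]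
  have hTint : Integrable (fun t => ∫ ξ : Euc n, Fk μ α x (t, ξ)) (volume.restrict (Ioi 0)) :=
    hFkint2.integral_prod_left
  have hPT : ∫ t in Ioi (0:ℝ), t ^ (((n:ℝ) - α) / 2 - 1) *
      ∫ y, Real.exp (-(π * ‖x - y‖ ^ 2 * t)) ∂μ =
      (∫ t in Ioi (0:ℝ), ∫ ξ : Euc n, Fk μ α x (t, ξ)).re := by
    have h9 := integral_re hTint
    rw [RCLike.re_eq_complex_re] at h9
    rw [← h9]
    exact setIntegral_congr_fun measurableSet_Ioi fun t htp => hre t htp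
  have hT2 : (∫ t in Ioi (0:ℝ), ∫ ξ : Euc n, Fk μ α x (t, ξ)) =
      FourierTransformInv.fourierInv (hfun μ α) x := by
    rw [integral_integral_swap (f := fun t ξ => Fk μ α x (t, ξ)) hFkint2,
      Real.fourierInv_eq']
    refine integral_congr_ae ((ae_ne_zero hn).mono fun ξ hξ => ?_)
    dsimp only
    rw [slice_t_int μ α hα x hξ, smul_eq_mul]
    simp only [hfun]
    have hphase : Complex.exp (((2 * π * (inner ℝ ξ x : ℝ) : ℝ) : ℂ) * Complex.I) =
        Complex.exp (2 * π * Complex.I * ((inner ℝ x ξ : ℝ) : ℂ)) := by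
      rw [real_inner_comm ξ x]
      congr 1
      push_cast
      ring
    rw [hphase]
    ring
  rw [hriesz, ENNReal.toReal_mul, ENNReal.toReal_ofReal hc₀pos.le]
  congr 1
  rw [← hP, hPT, hT2]

end RieszAux

open RieszAux in
theorem stmt_10 {n : ℕ} (α : ℝ) (hα : 0 < α) (hαn : α < n)
    (μ : Measure (Euc n)) [IsFiniteMeasure μ]
    (hF : (∫⁻ ξ : Euc n,
        (‖∫ x, Complex.exp (Complex.I * ((inner ℝ x ξ : ℝ) : ℂ)) ∂μ‖₊ : ℝ≥0∞) *
          ENNReal.ofReal (‖ξ‖ ^ (-α))) ≠ ⊤) :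
    (∀ x, rieszPot α μ x ≠ ⊤) ∧
      Continuous (fun x => (rieszPot α μ x).toReal) ∧
      Tendsto (fun x => (rieszPot α μ x).toReal) (Filter.cocompact (Euc n)) (nhds 0) := by
  have hFin : Jint μ α ≠ ⊤ := hF
  have hkey := key μ α hα hαn hFin
  refine ⟨fun x => (hkey x).1, ?_, ?_⟩ <;>
  · have hrw : (fun x => (rieszPot α μ x).toReal) =
        fun x => (Real.pi ^ (((n : ℝ) - α) / 2) / Real.Gamma (((n : ℝ) - α) / 2)) *
          (FourierTransformInv.fourierInv (hfun μ α) x).re := funext fun x => (hkey x).2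
    rw [hrw]
    have hint := hfun_int μ α hα hFin
    have hcont : Continuous (FourierTransformInv.fourierInv (hfun μ α)) := by
      refine VectorFourier.fourierIntegral_continuous Real.continuous_fourierChar ?_ hint
      exact (continuous_inner.neg : Continuous fun p : Euc n × Euc n => -(inner ℝ p.1 p.2 : ℝ))
    first
    | exact (continuous_const.mul (Complex.continuous_re.comp hcont))
    | · have h0 : Tendsto (FourierTransform.fourier (hfun μ α)) (cocompact (Euc n)) (nhds 0) :=
          tendsto_integral_exp_inner_smul_cocompact (hfun μ α)
        have hneg : Tendsto (fun x : Euc n => -x) (cocompact (Euc n)) (cocompact (Euc n)) :=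
          (Homeomorph.neg (Euc n)).toCocompactMap.cocompact_tendsto'
        have h1 : Tendsto (FourierTransformInv.fourierInv (hfun μ α)) (cocompact (Euc n)) (nhds 0) := by
          have heq : FourierTransformInv.fourierInv (hfun μ α) =
              fun x => FourierTransform.fourier (hfun μ α) (-x) :=
            funext fun x => Real.fourierInv_eq_fourier_neg _ _
          rw [heq]; exact h0.comp hneg
        have h2 := (Complex.continuous_re.tendsto 0).comp h1
        have h3 := h2.const_mul (Real.pi ^ (((n : ℝ) - α) / 2) / Real.Gamma (((n : ℝ) - α) / 2))
        simp only [Function.comp_def, Complex.zero_re, mul_zero] at h3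
        exact h3

end
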